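/- In the finite-order expansion ψ = ψ₀ + ψ₁/r + ψ₂/r² + (log r)ψ_{3,1}/r³ + ψ₃/r³ with each coefficient r-independent, requiring that □_g ψ = O(r⁻⁴ log r) as r → ∞ (where □_g is the Schwarzschild-de Sitter wave operator) forces the recurrence relations ψ₁ = 0, ψ_{3,1} = 0, and ψ₂ = -(3/(2Λ)) Δ̃ψ₀, where Δ̃ = (3/Λ)∂_t² + Δ_{S²} is the Laplacian of the conformal boundary metric. -/

import Mathlib

noncomputable section

/-- The unit sphere `S² ⊂ ℝ³`. -/
abbrev S2 : Type := Metric.sphere (0 : EuclideanSpace ℝ (Fin 3)) 1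

namespace Stmt6Aux


open Filter Topology

def Tser (x0 x1 x2 x31 x3 r : ℝ) : ℝ :=
  x0 + x1 / r + x2 / r ^ 2 + Real.log r * x31 / r ^ 3 + x3 / r ^ 3

def PL (p q s u v w z : ℝ) : ℝ → ℝ := fun r =>
  p + q * (1/r) + s * (1/r)^2 + u * (1/r)^3 + v * (Real.log r / r)
    + w * ((Real.log r / r) * (1/r)) + z * ((Real.log r / r) * (1/r)^2)

def Gd (Λ m c1 c2 c31 c3 r : ℝ) : ℝ :=
  (4*Λ*r^3/3 - 2*r + 2*m) * ((-c1*r^2 - 2*c2*r + (c31 - 3*c3) - 3*c31*Real.log r) / r^4)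
  + (Λ*r^4/3 - r^2 + 2*m*r) *
      ((-2*c1*r - 2*c2 - 3*c31/r) / r^4
        - 4 * ((-c1*r^2 - 2*c2*r + (c31 - 3*c3) - 3*c31*Real.log r) / r^5))

def Eexp (Λ m a0 a1 a2 a31 a3 b0 b1 b2 b31 b3 c1 c2 c31 c3 r : ℝ) : ℝ :=
  (Λ * r ^ 2 / 3 - 1 + 2 * m / r)⁻¹ * Tser a0 a1 a2 a31 a3 r
  - (1/r^2) * Gd Λ m c1 c2 c31 c3 r + (1/r^2) * Tser b0 b1 b2 b31 b3 r

-- placeholders: assume part1 lemmas available (will merge); restate axioms here for test speed? no, copy.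
lemma tendsto_X : Tendsto (fun r : ℝ => 1/r) atTop (𝓝 0) := by
  simpa [one_div] using tendsto_inv_atTop_zero (𝕜 := ℝ)

lemma tendsto_W : Tendsto (fun r : ℝ => Real.log r / r) atTop (𝓝 0) := by
  simpa using Real.isLittleO_log_id_atTop.tendsto_div_nhds_zero

lemma tendsto_PL (p q s u v w z : ℝ) : Tendsto (PL p q s u v w z) atTop (𝓝 p) := by
  have hX := tendsto_X
  have hW := tendsto_W
  have h := ((((((tendsto_const_nhds (x := p)).add (hX.const_mul q)).add
      ((hX.pow 2).const_mul s)).add ((hX.pow 3).const_mul u)).add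
      (hW.const_mul v)).add ((hW.mul hX).const_mul w)).add
      ((hW.mul (hX.pow 2)).const_mul z)
  have hv : p + q * 0 + s * 0^2 + u * 0^3 + v * 0 + w * (0 * 0) + z * (0 * 0^2) = p := by ring
  rw [hv] at h
  exact h

lemma tendsto_Tser (x0 x1 x2 x31 x3 : ℝ) :
    Tendsto (fun r => Tser x0 x1 x2 x31 x3 r) atTop (𝓝 x0) := by
  apply Tendsto.congr' ?_ (tendsto_PL x0 x1 x2 x3 0 0 x31)
  filter_upwards [eventually_gt_atTop 0] with r hr
  simp only [PL, Tser]
  field_simp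
  ring

lemma Qpos {Λ m : ℝ} (hΛ : 0 < Λ) (hm : 0 < m) {r : ℝ}
    (hr : Real.sqrt (3/Λ) + 1 ≤ r) : 0 < Λ * r ^ 2 / 3 - 1 + 2 * m / r := by
  have hs : 0 ≤ Real.sqrt (3/Λ) := Real.sqrt_nonneg _
  have hr0 : 0 < r := lt_of_lt_of_le (by linarith) hr
  have h1 : Real.sqrt (3/Λ) < r := by linarith
  have h2 : 3/Λ < r ^ 2 := by
    have := Real.sq_sqrt (le_of_lt (by positivity : (0:ℝ) < 3/Λ))
    nlinarith
  have h3 : 3 < Λ * r ^ 2 := by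
    rw [div_lt_iff₀ hΛ] at h2; nlinarith
  have h4 : 0 < 2 * m / r := by positivity
  linarith

lemma tendsto_Q2 {Λ m : ℝ} (hΛ : 0 < Λ) (hm : 0 < m) :
    Tendsto (fun r : ℝ => r ^ 2 / (Λ * r ^ 2 / 3 - 1 + 2 * m / r)) atTop (𝓝 (3/Λ)) := by
  have h := (tendsto_PL (Λ/3) 0 (-1) (2*m) 0 0 0).inv₀ (by positivity)
  have hval : ((Λ:ℝ)/3)⁻¹ = 3/Λ := by rw [inv_div]
  rw [hval] at h
  apply Tendsto.congr' ?_ h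
  filter_upwards [eventually_ge_atTop (Real.sqrt (3/Λ) + 1)] with r hr
  have hr0 : (0:ℝ) < r := lt_of_lt_of_le (by positivity) hr
  have hQ := Qpos hΛ hm hr
  have hPL : PL (Λ/3) 0 (-1) (2*m) 0 0 0 r = (Λ * r ^ 2 / 3 - 1 + 2 * m / r) / r ^ 2 := by
    simp only [PL]
    field_simp
    ring
  rw [hPL, inv_div]

lemma tendsto_Q1 {Λ m : ℝ} (hΛ : 0 < Λ) (hm : 0 < m) :
    Tendsto (fun r : ℝ => r / (Λ * r ^ 2 / 3 - 1 + 2 * m / r)) atTop (𝓝 0) := by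
  have h := tendsto_X.mul (tendsto_Q2 hΛ hm)
  rw [zero_mul] at h
  apply Tendsto.congr' ?_ h
  filter_upwards [eventually_gt_atTop 0] with r hr
  have h2 : r ^ 2 / (Λ * r ^ 2 / 3 - 1 + 2 * m / r)
      = r * (r / (Λ * r ^ 2 / 3 - 1 + 2 * m / r)) := by
    rw [pow_two, mul_div_assoc]
  rw [h2, one_div, inv_mul_cancel_left₀ hr.ne']

lemma tendsto_Q3 {Λ m : ℝ} (hΛ : 0 < Λ) (hm : 0 < m) :
    Tendsto (fun r : ℝ => (3*r - 6*m) / (Λ * (Λ * r ^ 2 / 3 - 1 + 2 * m / r))) atTop (𝓝 0) := by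
  have h := (((tendsto_X.const_mul 3).sub ((tendsto_X.pow 2).const_mul (6*m))).mul_const
      (1/Λ)).mul (tendsto_Q2 hΛ hm)
  have hval : ((3:ℝ) * 0 - 6*m*0^2) * (1/Λ) * (3/Λ) = 0 := by ring
  rw [hval] at h
  apply Tendsto.congr' ?_ h
  filter_upwards [eventually_ge_atTop (Real.sqrt (3/Λ) + 1)] with r hr
  have hr0 : (0:ℝ) < r := lt_of_lt_of_le (by positivity) hr
  have hQ := Qpos hΛ hm hr
  set Y := Λ * r ^ 2 / 3 - 1 + 2 * m / r with hY
  field_simp [hQ.ne']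

lemma limit1 {Λ m : ℝ} (hΛ : 0 < Λ) (hm : 0 < m)
    (a0 a1 a2 a31 a3 b0 b1 b2 b31 b3 c1 c2 c31 c3 : ℝ) :
    Tendsto (fun r => r * Eexp Λ m a0 a1 a2 a31 a3 b0 b1 b2 b31 b3 c1 c2 c31 c3 r) atTop
      (𝓝 (2*Λ/3*c1)) := by
  have hGdR : Tendsto (fun r =>
      PL (4*Λ/3) 0 (-2) (2*m) 0 0 0 r * PL (-c1) (-2*c2) (c31-3*c3) 0 0 (-3*c31) 0 r
      + PL (Λ/3) 0 (-1) (2*m) 0 0 0 r * PL (-2*c1) (-2*c2) (-3*c31) 0 0 0 0 r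
      - 4*(PL (Λ/3) 0 (-1) (2*m) 0 0 0 r * PL (-c1) (-2*c2) (c31-3*c3) 0 0 (-3*c31) 0 r))
      atTop (𝓝 (4*Λ/3*(-c1) + Λ/3*(-2*c1) - 4*(Λ/3*(-c1)))) :=
    (((tendsto_PL _ _ _ _ _ _ _).mul (tendsto_PL _ _ _ _ _ _ _)).add
      ((tendsto_PL _ _ _ _ _ _ _).mul (tendsto_PL _ _ _ _ _ _ _))).sub
      (((tendsto_PL _ _ _ _ _ _ _).mul (tendsto_PL _ _ _ _ _ _ _)).const_mul 4)
  have H := (((tendsto_Tser a0 a1 a2 a31 a3).mul (tendsto_Q1 hΛ hm)).sub hGdR).add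
      ((tendsto_Tser b0 b1 b2 b31 b3).mul tendsto_X)
  have hval : a0*0 - (4*Λ/3*(-c1) + Λ/3*(-2*c1) - 4*(Λ/3*(-c1))) + b0*0 = 2*Λ/3*c1 := by ring
  rw [hval] at H
  apply Tendsto.congr' ?_ H
  filter_upwards [eventually_ge_atTop (Real.sqrt (3/Λ) + 1)] with r hr
  have hr0 : (0:ℝ) < r := lt_of_lt_of_le (by positivity) hr
  symm
  simp only [Eexp]
  rw [show r * ((Λ * r ^ 2 / 3 - 1 + 2 * m / r)⁻¹ * Tser a0 a1 a2 a31 a3 r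
      - 1/r^2 * Gd Λ m c1 c2 c31 c3 r + 1/r^2 * Tser b0 b1 b2 b31 b3 r)
      = Tser a0 a1 a2 a31 a3 r * (r / (Λ * r ^ 2 / 3 - 1 + 2 * m / r))
        + (r * (1/r^2 * Tser b0 b1 b2 b31 b3 r) - r * (1/r^2 * Gd Λ m c1 c2 c31 c3 r)) from by
    rw [div_eq_mul_inv]; ring]
  have hrest : r * (1/r^2 * Tser b0 b1 b2 b31 b3 r) - r * (1/r^2 * Gd Λ m c1 c2 c31 c3 r)
      = -(PL (4*Λ/3) 0 (-2) (2*m) 0 0 0 r * PL (-c1) (-2*c2) (c31-3*c3) 0 0 (-3*c31) 0 r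
          + PL (Λ/3) 0 (-1) (2*m) 0 0 0 r * PL (-2*c1) (-2*c2) (-3*c31) 0 0 0 0 r
          - 4*(PL (Λ/3) 0 (-1) (2*m) 0 0 0 r * PL (-c1) (-2*c2) (c31-3*c3) 0 0 (-3*c31) 0 r))
        + Tser b0 b1 b2 b31 b3 r * (1/r) := by
    simp only [Gd, PL, Tser]
    field_simp
    ring
  rw [hrest]
  ring

lemma limit2 {Λ m : ℝ} (hΛ : 0 < Λ) (hm : 0 < m)
    (a0 a2 a31 a3 b0 b2 b31 b3 c2 c31 c3 : ℝ) :
    Tendsto (fun r => r ^ 2 * Eexp Λ m a0 0 a2 a31 a3 b0 0 b2 b31 b3 0 c2 c31 c3 r) atTop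
      (𝓝 (3/Λ*a0 + b0 + 2*Λ/3*c2)) := by
  have hGdR : Tendsto (fun r =>
      PL (4*Λ/3) 0 (-2) (2*m) 0 0 0 r * PL (-2*c2) (c31-3*c3) 0 0 (-3*c31) 0 0 r
      + PL (Λ/3) 0 (-1) (2*m) 0 0 0 r * PL (-2*c2) (-3*c31) 0 0 0 0 0 r
      - 4*(PL (Λ/3) 0 (-1) (2*m) 0 0 0 r * PL (-2*c2) (c31-3*c3) 0 0 (-3*c31) 0 0 r))
      atTop (𝓝 (4*Λ/3*(-2*c2) + Λ/3*(-2*c2) - 4*(Λ/3*(-2*c2)))) :=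
    (((tendsto_PL _ _ _ _ _ _ _).mul (tendsto_PL _ _ _ _ _ _ _)).add
      ((tendsto_PL _ _ _ _ _ _ _).mul (tendsto_PL _ _ _ _ _ _ _))).sub
      (((tendsto_PL _ _ _ _ _ _ _).mul (tendsto_PL _ _ _ _ _ _ _)).const_mul 4)
  have H := (((tendsto_Tser a0 0 a2 a31 a3).mul (tendsto_Q2 hΛ hm)).sub hGdR).add
      (tendsto_Tser b0 0 b2 b31 b3)
  have hval : a0*(3/Λ) - (4*Λ/3*(-2*c2) + Λ/3*(-2*c2) - 4*(Λ/3*(-2*c2))) + b0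
      = 3/Λ*a0 + b0 + 2*Λ/3*c2 := by field_simp; ring
  rw [hval] at H
  apply Tendsto.congr' ?_ H
  filter_upwards [eventually_ge_atTop (Real.sqrt (3/Λ) + 1)] with r hr
  have hr0 : (0:ℝ) < r := lt_of_lt_of_le (by positivity) hr
  symm
  simp only [Eexp]
  rw [show r ^ 2 * ((Λ * r ^ 2 / 3 - 1 + 2 * m / r)⁻¹ * Tser a0 0 a2 a31 a3 r
      - 1/r^2 * Gd Λ m 0 c2 c31 c3 r + 1/r^2 * Tser b0 0 b2 b31 b3 r)
      = Tser a0 0 a2 a31 a3 r * (r ^ 2 / (Λ * r ^ 2 / 3 - 1 + 2 * m / r))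
        + (r ^ 2 * (1/r^2 * Tser b0 0 b2 b31 b3 r) - r ^ 2 * (1/r^2 * Gd Λ m 0 c2 c31 c3 r))
      from by rw [div_eq_mul_inv]; ring]
  have hrest : r ^ 2 * (1/r^2 * Tser b0 0 b2 b31 b3 r) - r ^ 2 * (1/r^2 * Gd Λ m 0 c2 c31 c3 r)
      = -(PL (4*Λ/3) 0 (-2) (2*m) 0 0 0 r * PL (-2*c2) (c31-3*c3) 0 0 (-3*c31) 0 0 r
          + PL (Λ/3) 0 (-1) (2*m) 0 0 0 r * PL (-2*c2) (-3*c31) 0 0 0 0 0 r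
          - 4*(PL (Λ/3) 0 (-1) (2*m) 0 0 0 r * PL (-2*c2) (c31-3*c3) 0 0 (-3*c31) 0 0 r))
        + Tser b0 0 b2 b31 b3 r := by
    simp only [Gd, PL, Tser]
    field_simp
    ring
  rw [hrest]
  ring

set_option maxHeartbeats 1000000 in
lemma limit3 {Λ m : ℝ} (hΛ : 0 < Λ) (hm : 0 < m)
    (a0 a2 a31 a3 b2 b31 b3 c2 c31 c3 : ℝ) :
    Tendsto (fun r => r ^ 3 * Eexp Λ m a0 0 a2 a31 a3 (-(3/Λ*a0 + 2*Λ/3*c2)) 0 b2 b31 b3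
        0 c2 c31 c3 r) atTop (𝓝 (Λ*c31)) := by
  have H := ((tendsto_Tser a0 0 a2 a31 a3).mul (tendsto_Q3 hΛ hm)).add
      (tendsto_PL (Λ*c31) (3*a2/Λ + b2 + 2*c2)
        (3*a3/Λ + b3 - 2*(c31-3*c3) - 3*c31 - 8*m*c2) (6*m*(c31-3*c3) + 6*m*c31) 0
        (3*a31/Λ + b31 + 6*c31) (-18*m*c31))
  have hval : a0*0 + Λ*c31 = Λ*c31 := by ring
  rw [hval] at H
  apply Tendsto.congr' ?_ H
  filter_upwards [eventually_ge_atTop (Real.sqrt (3/Λ) + 1)] with r hr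
  have hr0 : (0:ℝ) < r := lt_of_lt_of_le (by positivity) hr
  have hQ := Qpos hΛ hm hr
  symm
  simp only [Eexp]
  rw [show r ^ 3 * ((Λ * r ^ 2 / 3 - 1 + 2 * m / r)⁻¹ * Tser a0 0 a2 a31 a3 r
      - 1/r^2 * Gd Λ m 0 c2 c31 c3 r + 1/r^2 * Tser (-(3/Λ*a0 + 2*Λ/3*c2)) 0 b2 b31 b3 r)
      = r ^ 3 * ((Λ * r ^ 2 / 3 - 1 + 2 * m / r)⁻¹ * Tser a0 0 a2 a31 a3 r)
        + (r ^ 3 * (1/r^2 * Tser (-(3/Λ*a0 + 2*Λ/3*c2)) 0 b2 b31 b3 r)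
            - r ^ 3 * (1/r^2 * Gd Λ m 0 c2 c31 c3 r)) from by ring]
  have hsplit : r ^ 3 * ((Λ * r ^ 2 / 3 - 1 + 2 * m / r)⁻¹ * Tser a0 0 a2 a31 a3 r)
      = Tser a0 0 a2 a31 a3 r * ((3*r - 6*m) / (Λ * (Λ * r ^ 2 / 3 - 1 + 2 * m / r)))
        + 3/Λ * r * Tser a0 0 a2 a31 a3 r := by
    set A := Tser a0 0 a2 a31 a3 r with hA
    have hQrw : Λ * r ^ 2 / 3 - 1 + 2 * m / r = (Λ*r^3 - 3*r + 6*m)/(3*r) := by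
      field_simp; ring
    have hP : Λ*r^3 - 3*r + 6*m ≠ 0 := by
      have h2 := hQ
      rw [hQrw] at h2
      intro h
      rw [h] at h2
      simp at h2
    rw [hQrw]
    have hP' : -(r*3) + r^3*Λ + m*6 ≠ 0 := by contrapose! hP; linarith
    field_simp
    have hinv : (-(r * 3) + r ^ 3 * Λ + m * 6) * (-(r * 3) + r ^ 3 * Λ + m * 6)⁻¹ = 1 :=
      mul_inv_cancel₀ hP'
    linear_combination A * hinv
  rw [hsplit]
  have hrest : 3/Λ * r * Tser a0 0 a2 a31 a3 r
      + (r ^ 3 * (1/r^2 * Tser (-(3/Λ*a0 + 2*Λ/3*c2)) 0 b2 b31 b3 r)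
          - r ^ 3 * (1/r^2 * Gd Λ m 0 c2 c31 c3 r))
      = PL (Λ*c31) (3*a2/Λ + b2 + 2*c2)
          (3*a3/Λ + b3 - 2*(c31-3*c3) - 3*c31 - 8*m*c2) (6*m*(c31-3*c3) + 6*m*c31) 0
          (3*a31/Λ + b31 + 6*c31) (-18*m*c31) r := by
    simp only [Gd, PL, Tser]
    field_simp
    ring
  rw [add_assoc, hrest]

lemma hasDerivAt_N (c1 c2 c31 c3 : ℝ) {r : ℝ} (hr : 0 < r) :
    HasDerivAt (fun s : ℝ => -c1*s^2 - 2*c2*s + (c31 - 3*c3) - 3*c31*Real.log s)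
      (-2*c1*r - 2*c2 - 3*c31/r) r := by
  have h1 : HasDerivAt (fun s : ℝ => s^2) (2*r) r := by
    simpa using hasDerivAt_pow 2 r
  have h2 := Real.hasDerivAt_log hr.ne'
  have H := (((h1.const_mul (-c1)).add ((hasDerivAt_id r).const_mul (-(2*c2)))).add_const
      (c31 - 3*c3)).add (h2.const_mul (-(3*c31)))
  have hfe : (fun s : ℝ => -c1*s^2 - 2*c2*s + (c31 - 3*c3) - 3*c31*Real.log s)
      = fun s : ℝ => (-c1*s^2 + -(2*c2)*s + (c31 - 3*c3)) + -(3*c31)*Real.log s := by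
    funext s; ring
  have hde : -2*c1*r - 2*c2 - 3*c31/r = (-c1*(2*r) + -(2*c2)*1 + -(3*c31)*r⁻¹) := by
    field_simp; ring
  rw [hfe, hde]
  exact H

lemma hasDerivAt_P (Λ m : ℝ) (r : ℝ) :
    HasDerivAt (fun s : ℝ => Λ*s^4/3 - s^2 + 2*m*s) (4*Λ*r^3/3 - 2*r + 2*m) r := by
  have h4 : HasDerivAt (fun s : ℝ => s^4) (4*r^3) r := by
    simpa using hasDerivAt_pow 4 r
  have h2 : HasDerivAt (fun s : ℝ => s^2) (2*r) r := by
    simpa using hasDerivAt_pow 2 r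
  have H := (((h4.const_mul Λ).div_const 3).sub h2).add ((hasDerivAt_id r).const_mul (2*m))
  have hfe : (fun s : ℝ => Λ*s^4/3 - s^2 + 2*m*s)
      = fun s : ℝ => (Λ*s^4/3 - s^2) + (2*m)*s := by funext s; ring
  have hde : 4*Λ*r^3/3 - 2*r + 2*m = (Λ*(4*r^3)/3 - 2*r) + (2*m)*1 := by ring
  rw [hfe, hde]
  exact H

lemma hasDerivAt_psi (c0 c1 c2 c31 c3 : ℝ) {s : ℝ} (hs : 0 < s) :
    HasDerivAt (fun u : ℝ => c0 + c1/u + c2/u^2 + Real.log u * c31/u^3 + c3/u^3)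
      ((-c1*s^2 - 2*c2*s + (c31 - 3*c3) - 3*c31*Real.log s) / s^4) s := by
  have hs0 := hs.ne'
  have h2 : (s : ℝ)^2 ≠ 0 := pow_ne_zero _ hs0
  have h3 : (s : ℝ)^3 ≠ 0 := pow_ne_zero _ hs0
  have hinv1 : HasDerivAt (fun u : ℝ => u⁻¹) (-(s^2)⁻¹) s := hasDerivAt_inv hs0
  have hinv2 : HasDerivAt (fun u : ℝ => ((u^2))⁻¹) (-(2*s)/(s^2)^2) s := by
    have := (hasDerivAt_pow 2 s).inv h2
    exact this.congr_deriv (by norm_num)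
  have hinv3 : HasDerivAt (fun u : ℝ => ((u^3))⁻¹) (-(3*s^2)/(s^3)^2) s := by
    have := (hasDerivAt_pow 3 s).inv h3
    exact this.congr_deriv (by norm_num)
  have hlog : HasDerivAt (fun u : ℝ => Real.log u * c31) (s⁻¹ * c31) s :=
    (Real.hasDerivAt_log hs.ne').mul_const c31
  have H := ((((hasDerivAt_const s c0).add (hinv1.const_mul c1)).add
      (hinv2.const_mul c2)).add (hlog.mul hinv3)).add (hinv3.const_mul c3)
  have hfe : (fun u : ℝ => c0 + c1/u + c2/u^2 + Real.log u * c31/u^3 + c3/u^3)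
      = fun u : ℝ => c0 + c1*(u⁻¹) + c2*((u^2)⁻¹) + (Real.log u * c31)*((u^3)⁻¹)
          + c3*((u^3)⁻¹) := by
    funext u; ring
  have hde : (-c1*s^2 - 2*c2*s + (c31 - 3*c3) - 3*c31*Real.log s) / s^4
      = 0 + c1*(-(s^2)⁻¹) + c2*(-(2*s)/(s^2)^2)
          + (s⁻¹*c31*((s^3))⁻¹ + Real.log s * c31 * (-(3*s^2)/(s^3)^2))
          + c3*(-(3*s^2)/(s^3)^2) := by
    field_simp
    ring
  rw [hfe, hde]
  exact H

lemma hasDerivAt_G (Λ m c1 c2 c31 c3 : ℝ) {r : ℝ} (hr : 0 < r) :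
    HasDerivAt (fun s : ℝ => (Λ*s^4/3 - s^2 + 2*m*s)
        * ((-c1*s^2 - 2*c2*s + (c31 - 3*c3) - 3*c31*Real.log s) / s^4))
      (Gd Λ m c1 c2 c31 c3 r) r := by
  have hr0 := hr.ne'
  have h4 : (r : ℝ)^4 ≠ 0 := pow_ne_zero _ hr0
  have hinv4 : HasDerivAt (fun u : ℝ => ((u^4))⁻¹) (-(4*r^3)/(r^4)^2) r := by
    have := (hasDerivAt_pow 4 r).inv h4
    exact this.congr_deriv (by norm_num)
  have hN := hasDerivAt_N c1 c2 c31 c3 hr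
  have hP := hasDerivAt_P Λ m r
  have H := hP.mul (hN.mul hinv4)
  have hfe : (fun s : ℝ => (Λ*s^4/3 - s^2 + 2*m*s)
        * ((-c1*s^2 - 2*c2*s + (c31 - 3*c3) - 3*c31*Real.log s) / s^4))
      = fun s : ℝ => (Λ*s^4/3 - s^2 + 2*m*s)
        * ((-c1*s^2 - 2*c2*s + (c31 - 3*c3) - 3*c31*Real.log s) * ((s^4)⁻¹)) := by
    funext s; ring
  have hde : Gd Λ m c1 c2 c31 c3 r
      = (4*Λ*r^3/3 - 2*r + 2*m) * ((-c1*r^2 - 2*c2*r + (c31 - 3*c3) - 3*c31*Real.log r) * (r^4)⁻¹)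
        + (Λ*r^4/3 - r^2 + 2*m*r) * ((-2*c1*r - 2*c2 - 3*c31/r) * (r^4)⁻¹
            + (-c1*r^2 - 2*c2*r + (c31 - 3*c3) - 3*c31*Real.log r) * (-(4*r^3)/(r^4)^2)) := by
    simp only [Gd]
    field_simp
    ring
  rw [hfe, hde]
  exact H

lemma deriv_metric (Λ m c0 c1 c2 c31 c3 : ℝ) {r : ℝ} (hr : 0 < r) :
    deriv (fun s : ℝ => s ^ 2 * (Λ * s ^ 2 / 3 - 1 + 2 * m / s)
        * deriv (fun u : ℝ => c0 + c1/u + c2/u^2 + Real.log u * c31/u^3 + c3/u^3) s) r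
      = Gd Λ m c1 c2 c31 c3 r := by
  have hev : (fun s : ℝ => s ^ 2 * (Λ * s ^ 2 / 3 - 1 + 2 * m / s)
        * deriv (fun u : ℝ => c0 + c1/u + c2/u^2 + Real.log u * c31/u^3 + c3/u^3) s)
      =ᶠ[𝓝 r] (fun s : ℝ => (Λ*s^4/3 - s^2 + 2*m*s)
        * ((-c1*s^2 - 2*c2*s + (c31 - 3*c3) - 3*c31*Real.log s) / s^4)) := by
    filter_upwards [Ioi_mem_nhds hr] with s hs
    rw [(hasDerivAt_psi c0 c1 c2 c31 c3 hs).deriv]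
    have hs0 : (s:ℝ) ≠ 0 := (Set.mem_Ioi.mp hs).ne'
    field_simp
  rw [hev.deriv_eq]
  exact (hasDerivAt_G Λ m c1 c2 c31 c3 hr).deriv



open Filter Topology

lemma diff_deriv {f : ℝ → ℝ} (hf : ContDiff ℝ 2 f) : Differentiable ℝ (deriv f) := by
  have h : ContDiff ℝ ((1 + 1 : ℕ) : WithTop ℕ∞) f := by exact_mod_cast hf
  have h2 := ContDiff.iterate_deriv' 1 1 h
  rw [Function.iterate_one] at h2
  exact h2.differentiable (by norm_num)

lemma deriv_comb {f g h k l : ℝ → ℝ} (hf : Differentiable ℝ f) (hg : Differentiable ℝ g)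
    (hh : Differentiable ℝ h) (hk : Differentiable ℝ k) (hl : Differentiable ℝ l)
    (α β γ δ : ℝ) :
    deriv (fun s => f s + g s * α + h s * β + k s * γ + l s * δ)
      = fun s => deriv f s + deriv g s * α + deriv h s * β + deriv k s * γ + deriv l s * δ := by
  funext x
  have H := (((((hf x).hasDerivAt.add ((hg x).hasDerivAt.mul_const α)).add
      ((hh x).hasDerivAt.mul_const β)).add ((hk x).hasDerivAt.mul_const γ)).add
      ((hl x).hasDerivAt.mul_const δ))
  exact H.deriv

lemma deriv2_comb {f g h k l : ℝ → ℝ} (hf : ContDiff ℝ 2 f) (hg : ContDiff ℝ 2 g)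
    (hh : ContDiff ℝ 2 h) (hk : ContDiff ℝ 2 k) (hl : ContDiff ℝ 2 l)
    (α β γ δ t : ℝ) :
    deriv (deriv (fun s => f s + g s * α + h s * β + k s * γ + l s * δ)) t
      = deriv (deriv f) t + deriv (deriv g) t * α + deriv (deriv h) t * β
        + deriv (deriv k) t * γ + deriv (deriv l) t * δ := by
  have h1 : (2 : WithTop ℕ∞) ≠ 0 := by norm_num
  rw [deriv_comb (hf.differentiable h1) (hg.differentiable h1) (hh.differentiable h1)
      (hk.differentiable h1) (hl.differentiable h1)]
  have H := ((((((diff_deriv hf) t).hasDerivAt.add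
      (((diff_deriv hg) t).hasDerivAt.mul_const α)).add
      (((diff_deriv hh) t).hasDerivAt.mul_const β)).add
      (((diff_deriv hk) t).hasDerivAt.mul_const γ)).add
      (((diff_deriv hl) t).hasDerivAt.mul_const δ))
  exact H.deriv

lemma squeeze_aux {E : ℝ → ℝ} {C r₀ : ℝ} (h : ∀ r ≥ r₀, |E r| ≤ C * Real.log r / r ^ 4)
    {k : ℕ} (hk : k ≤ 3) (hC : 0 < C) :
    Tendsto (fun r => r ^ k * E r) atTop (𝓝 0) := by
  apply squeeze_zero_norm' (a := fun r => C * (Real.log r / r))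
  · filter_upwards [eventually_ge_atTop (max r₀ 1)] with r hr
    have hr1 : (1:ℝ) ≤ r := le_trans (le_max_right _ _) hr
    have h1 := h r (le_trans (le_max_left _ _) hr)
    have hlog : 0 ≤ Real.log r := Real.log_nonneg hr1
    have hr0 : (0:ℝ) < r := lt_of_lt_of_le one_pos hr1
    have hk4 : r ^ k * r ≤ r ^ 4 := by
      calc r ^ k * r = r ^ (k+1) := (pow_succ r k).symm
      _ ≤ r ^ 4 := pow_le_pow_right₀ hr1 (by omega)
    calc ‖r ^ k * E r‖ = r ^ k * |E r| := by
          rw [norm_mul, Real.norm_eq_abs, Real.norm_eq_abs, abs_of_nonneg (by positivity)]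
    _ ≤ r ^ k * (C * Real.log r / r ^ 4) :=
          mul_le_mul_of_nonneg_left h1 (by positivity)
    _ ≤ C * (Real.log r / r) := by
          have e1 : r ^ k * (C * Real.log r / r ^ 4)
              = (C * Real.log r * (r ^ k * r)) / (r ^ 4 * r) := by
            field_simp
          have e2 : C * (Real.log r / r) = (C * Real.log r * r ^ 4) / (r ^ 4 * r) := by
            field_simp
          rw [e1, e2, div_le_div_iff_of_pos_right (by positivity)]
          exact mul_le_mul_of_nonneg_left hk4 (by positivity)
  · have h2 : Tendsto (fun r : ℝ => Real.log r / r) atTop (𝓝 0) := by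
      simpa using Real.isLittleO_log_id_atTop.tendsto_div_nhds_zero
    simpa using h2.const_mul C


end Stmt6Aux

/-- **Recurrence relations for the asymptotic expansion.** In the finite-order
expansion `ψ = ψ₀ + ψ₁/r + ψ₂/r² + (log r)ψ_{3,1}/r³ + ψ₃/r³` with
`r`-independent coefficients, the requirement `□_g ψ = O(r⁻⁴ log r)` as
`r → ∞` (with `□_g ψ = φ²∂_t²ψ - r⁻²∂_r(r²φ⁻²∂_rψ) + r⁻²Δ_{S²}ψ` the
Schwarzschild-de Sitter wave operator) forces `ψ₁ = 0`, `ψ_{3,1} = 0` and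
`ψ₂ = -(3/(2Λ)) Δ̃ψ₀`, where `Δ̃ = (3/Λ)∂_t² + Δ_{S²}` is the Laplacian of the
conformal boundary metric.  The spherical Laplacian is modelled by a linear
operator `ΔS` on functions on the cylinder `ℝ×S²`. -/

theorem stmt_6 (Λ m : ℝ) (hΛ : 0 < Λ) (hm : 0 < m)
    (hsub : 3 * m * Real.sqrt Λ < 1)
    (ΔS : (ℝ → S2 → ℝ) →ₗ[ℝ] (ℝ → S2 → ℝ))
    (ψ0 ψ1 ψ2 ψ31 ψ3 : ℝ → S2 → ℝ)
    (hreg : ∀ ω : S2, ContDiff ℝ 2 (fun t => ψ0 t ω) ∧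
      ContDiff ℝ 2 (fun t => ψ1 t ω) ∧ ContDiff ℝ 2 (fun t => ψ2 t ω) ∧
      ContDiff ℝ 2 (fun t => ψ31 t ω) ∧ ContDiff ℝ 2 (fun t => ψ3 t ω))
    (ψ : ℝ → ℝ → S2 → ℝ)
    (hψ : ∀ r t ω, ψ r t ω = ψ0 t ω + ψ1 t ω / r + ψ2 t ω / r ^ 2
        + Real.log r * ψ31 t ω / r ^ 3 + ψ3 t ω / r ^ 3)
    (hbound : ∃ C > (0 : ℝ), ∃ r₁ : ℝ, ∀ r ≥ r₁, ∀ (t : ℝ) (ω : S2),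
      |(Λ * r ^ 2 / 3 - 1 + 2 * m / r)⁻¹ * deriv (deriv (fun s => ψ r s ω)) t
        - (1 / r ^ 2) * deriv (fun s : ℝ =>
            s ^ 2 * (Λ * s ^ 2 / 3 - 1 + 2 * m / s)
              * deriv (fun u => ψ u t ω) s) r
        + (1 / r ^ 2) * ΔS (ψ r) t ω|
        ≤ C * Real.log r / r ^ 4) :
    ψ1 = 0 ∧ ψ31 = 0 ∧
      ∀ (t : ℝ) (ω : S2), ψ2 t ω = -(3 / (2 * Λ)) *
        ((3 / Λ) * deriv (deriv (fun s => ψ0 s ω)) t + ΔS ψ0 t ω) := by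
  classical
  obtain ⟨C, hC, r₁, hb⟩ := hbound
  set R0 : ℝ := Real.sqrt (3/Λ) + 1 with hR0def
  -- pointwise identification of the wave operator with the explicit expression Eexp
  have hE : ∀ (t : ℝ) (ω : S2), ∀ r, max r₁ R0 ≤ r →
      |Stmt6Aux.Eexp Λ m
        (deriv (deriv (fun s => ψ0 s ω)) t) (deriv (deriv (fun s => ψ1 s ω)) t)
        (deriv (deriv (fun s => ψ2 s ω)) t) (deriv (deriv (fun s => ψ31 s ω)) t)
        (deriv (deriv (fun s => ψ3 s ω)) t)
        (ΔS ψ0 t ω) (ΔS ψ1 t ω) (ΔS ψ2 t ω) (ΔS ψ31 t ω) (ΔS ψ3 t ω)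
        (ψ1 t ω) (ψ2 t ω) (ψ31 t ω) (ψ3 t ω) r| ≤ C * Real.log r / r ^ 4 := by
    intro t ω r hr
    have hrR0 : R0 ≤ r := le_trans (le_max_right _ _) hr
    have hr0 : (0:ℝ) < r := by
      have : (0:ℝ) < R0 := by rw [hR0def]; positivity
      linarith
    have h := hb r (le_trans (le_max_left _ _) hr) t ω
    have e1 : deriv (deriv (fun s => ψ r s ω)) t
        = Stmt6Aux.Tser (deriv (deriv (fun s => ψ0 s ω)) t) (deriv (deriv (fun s => ψ1 s ω)) t)
            (deriv (deriv (fun s => ψ2 s ω)) t) (deriv (deriv (fun s => ψ31 s ω)) t)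
            (deriv (deriv (fun s => ψ3 s ω)) t) r := by
      have hfe : (fun s => ψ r s ω) = fun s => ψ0 s ω + ψ1 s ω * (1/r) + ψ2 s ω * (1/r^2)
          + ψ31 s ω * (Real.log r/r^3) + ψ3 s ω * (1/r^3) := by
        funext s; rw [hψ]; ring
      rw [hfe, Stmt6Aux.deriv2_comb (hreg ω).1 (hreg ω).2.1 (hreg ω).2.2.1
        (hreg ω).2.2.2.1 (hreg ω).2.2.2.2]
      simp only [Stmt6Aux.Tser]
      ring
    have e2 : deriv (fun s : ℝ => s ^ 2 * (Λ * s ^ 2 / 3 - 1 + 2 * m / s)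
          * deriv (fun u => ψ u t ω) s) r
        = Stmt6Aux.Gd Λ m (ψ1 t ω) (ψ2 t ω) (ψ31 t ω) (ψ3 t ω) r := by
      rw [show (fun u => ψ u t ω) = (fun u : ℝ => ψ0 t ω + ψ1 t ω/u + ψ2 t ω/u^2
          + Real.log u * ψ31 t ω/u^3 + ψ3 t ω/u^3) from funext fun u => hψ u t ω]
      exact Stmt6Aux.deriv_metric Λ m _ _ _ _ _ hr0
    have e3 : ΔS (ψ r) t ω = Stmt6Aux.Tser (ΔS ψ0 t ω) (ΔS ψ1 t ω) (ΔS ψ2 t ω)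
        (ΔS ψ31 t ω) (ΔS ψ3 t ω) r := by
      have hsplit : ψ r = ψ0 + (1/r) • ψ1 + (1/r^2) • ψ2 + (Real.log r/r^3) • ψ31
          + (1/r^3) • ψ3 := by
        funext t' ω'
        simp only [Pi.add_apply, Pi.smul_apply, smul_eq_mul]
        rw [hψ]
        ring
      rw [hsplit, map_add, map_add, map_add, map_add, map_smul, map_smul, map_smul, map_smul]
      simp only [Pi.add_apply, Pi.smul_apply, smul_eq_mul, Stmt6Aux.Tser]
      ring
    rw [e1, e2, e3] at h
    simpa only [Stmt6Aux.Eexp] using h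
  -- Stage 1 : ψ1 = 0
  have h1 : ∀ (t : ℝ) (ω : S2), ψ1 t ω = 0 := by
    intro t ω
    have hlim := Stmt6Aux.limit1 hΛ hm
      (deriv (deriv (fun s => ψ0 s ω)) t) (deriv (deriv (fun s => ψ1 s ω)) t)
      (deriv (deriv (fun s => ψ2 s ω)) t) (deriv (deriv (fun s => ψ31 s ω)) t)
      (deriv (deriv (fun s => ψ3 s ω)) t)
      (ΔS ψ0 t ω) (ΔS ψ1 t ω) (ΔS ψ2 t ω) (ΔS ψ31 t ω) (ΔS ψ3 t ω)
      (ψ1 t ω) (ψ2 t ω) (ψ31 t ω) (ψ3 t ω)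
    have hzero := Stmt6Aux.squeeze_aux (hE t ω) (k := 1) (by norm_num) hC
    have hzero' : Filter.Tendsto (fun r => r * Stmt6Aux.Eexp Λ m
        (deriv (deriv (fun s => ψ0 s ω)) t) (deriv (deriv (fun s => ψ1 s ω)) t)
        (deriv (deriv (fun s => ψ2 s ω)) t) (deriv (deriv (fun s => ψ31 s ω)) t)
        (deriv (deriv (fun s => ψ3 s ω)) t)
        (ΔS ψ0 t ω) (ΔS ψ1 t ω) (ΔS ψ2 t ω) (ΔS ψ31 t ω) (ΔS ψ3 t ω)
        (ψ1 t ω) (ψ2 t ω) (ψ31 t ω) (ψ3 t ω) r) Filter.atTop (nhds 0) := by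
      simpa [pow_one] using hzero
    have huniq := tendsto_nhds_unique hlim hzero'
    have h23 : (2*Λ/3 : ℝ) ≠ 0 := by positivity
    exact (mul_eq_zero.mp huniq).resolve_left h23
  have hψ1 : ψ1 = 0 := funext fun t => funext fun ω => h1 t ω
  have ha1 : ∀ (t : ℝ) (ω : S2), deriv (deriv (fun s => ψ1 s ω)) t = 0 := by
    intro t ω
    rw [hψ1]
    simp
  have hb1 : ∀ (t : ℝ) (ω : S2), ΔS ψ1 t ω = 0 := by
    intro t ω
    rw [hψ1, map_zero]
    simp
  -- Stage 2 : the value of ψ2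
  have h2 : ∀ (t : ℝ) (ω : S2),
      3/Λ*(deriv (deriv (fun s => ψ0 s ω)) t) + (ΔS ψ0 t ω) + 2*Λ/3*(ψ2 t ω) = 0 := by
    intro t ω
    have hlim := Stmt6Aux.limit2 hΛ hm
      (deriv (deriv (fun s => ψ0 s ω)) t)
      (deriv (deriv (fun s => ψ2 s ω)) t) (deriv (deriv (fun s => ψ31 s ω)) t)
      (deriv (deriv (fun s => ψ3 s ω)) t)
      (ΔS ψ0 t ω) (ΔS ψ2 t ω) (ΔS ψ31 t ω) (ΔS ψ3 t ω)
      (ψ2 t ω) (ψ31 t ω) (ψ3 t ω)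
    have hEb : ∀ r ≥ max r₁ R0, |Stmt6Aux.Eexp Λ m
        (deriv (deriv (fun s => ψ0 s ω)) t) 0
        (deriv (deriv (fun s => ψ2 s ω)) t) (deriv (deriv (fun s => ψ31 s ω)) t)
        (deriv (deriv (fun s => ψ3 s ω)) t)
        (ΔS ψ0 t ω) 0 (ΔS ψ2 t ω) (ΔS ψ31 t ω) (ΔS ψ3 t ω)
        0 (ψ2 t ω) (ψ31 t ω) (ψ3 t ω) r| ≤ C * Real.log r / r ^ 4 := by
      intro r hr
      have h := hE t ω r hr
      rwa [ha1 t ω, hb1 t ω, h1 t ω] at h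
    have hzero := Stmt6Aux.squeeze_aux hEb (k := 2) (by norm_num) hC
    exact tendsto_nhds_unique hlim hzero
  -- Stage 3 : ψ31 = 0
  have h31 : ∀ (t : ℝ) (ω : S2), ψ31 t ω = 0 := by
    intro t ω
    have hS := h2 t ω
    have hb0 : ΔS ψ0 t ω
        = -(3/Λ*(deriv (deriv (fun s => ψ0 s ω)) t) + 2*Λ/3*(ψ2 t ω)) := by linarith
    have hlim := Stmt6Aux.limit3 hΛ hm
      (deriv (deriv (fun s => ψ0 s ω)) t)
      (deriv (deriv (fun s => ψ2 s ω)) t) (deriv (deriv (fun s => ψ31 s ω)) t)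
      (deriv (deriv (fun s => ψ3 s ω)) t)
      (ΔS ψ2 t ω) (ΔS ψ31 t ω) (ΔS ψ3 t ω)
      (ψ2 t ω) (ψ31 t ω) (ψ3 t ω)
    have hEb : ∀ r ≥ max r₁ R0, |Stmt6Aux.Eexp Λ m
        (deriv (deriv (fun s => ψ0 s ω)) t) 0
        (deriv (deriv (fun s => ψ2 s ω)) t) (deriv (deriv (fun s => ψ31 s ω)) t)
        (deriv (deriv (fun s => ψ3 s ω)) t)
        (-(3/Λ*(deriv (deriv (fun s => ψ0 s ω)) t) + 2*Λ/3*(ψ2 t ω))) 0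
        (ΔS ψ2 t ω) (ΔS ψ31 t ω) (ΔS ψ3 t ω)
        0 (ψ2 t ω) (ψ31 t ω) (ψ3 t ω) r| ≤ C * Real.log r / r ^ 4 := by
      intro r hr
      have h := hE t ω r hr
      rwa [ha1 t ω, hb1 t ω, h1 t ω, hb0] at h
    have hzero := Stmt6Aux.squeeze_aux hEb (k := 3) (by norm_num) hC
    have huniq := tendsto_nhds_unique hlim hzero
    exact (mul_eq_zero.mp huniq).resolve_left hΛ.ne'
  refine ⟨hψ1, funext fun t => funext fun ω => h31 t ω, ?_⟩
  intro t ω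
  have hS := h2 t ω
  have hΛ' : Λ ≠ 0 := hΛ.ne'
  field_simp at hS ⊢
  linarith

end
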